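/- Work in ℝ² equipped with the Euclidean metric d, and let P be the 12-point set { (10a + i, j) : a ∈ {0,1,2}, i ∈ {0,1}, j ∈ {0,1} } (three axis-aligned unit squares whose pairwise separation exceeds their diameter), with k = 4. Then NR(i) = 1 for every i ∈ P, and for every subset S ⊆ P with |S| ≤ 4 there exists a point i ∈ P with d(i,S) ≥ √2 = √2·NR(i). (In Euclidean space of dimension at least 2, no centers algorithm can be α-fair for any α < √2.) -/

import Mathlib

/-- The neighborhood radius of `x` with respect to population `P` and parameter `k`. -/
noncomputable def NR {X : Type*} [MetricSpace X] (P : Finset X) (k : ℕ) (x : X) : ℝ :=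
  sInf {r : ℝ | 0 ≤ r ∧ (P.card : ℝ) / (k : ℝ) ≤ ((P.filter fun p => dist x p ≤ r).card : ℝ)}

/-- Three axis-aligned unit squares in the Euclidean plane, separated by distance 10 − 1 > √2. -/
noncomputable def threeSquaresEuclidean : Finset (EuclideanSpace ℝ (Fin 2)) := by
  classical
  exact (Finset.range 3 ×ˢ Finset.range 2 ×ˢ Finset.range 2).image fun t =>
    (WithLp.toLp 2 ![(10 * t.1 + t.2.1 : ℝ), (t.2.2 : ℝ)] : EuclideanSpace ℝ (Fin 2))

/-! ### Auxiliary definitions and lemmas -/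

noncomputable def pt (a x y : ℕ) : EuclideanSpace ℝ (Fin 2) :=
  WithLp.toLp 2 ![(10 * a + x : ℝ), (y : ℝ)]

lemma mem_three {v : EuclideanSpace ℝ (Fin 2)} :
    v ∈ threeSquaresEuclidean ↔ ∃ a < 3, ∃ x < 2, ∃ y < 2, v = pt a x y := by
  simp only [threeSquaresEuclidean, pt, Finset.mem_image, Finset.mem_product, Finset.mem_range]
  constructor
  · rintro ⟨⟨a, x, y⟩, ⟨ha, hx, hy⟩, rfl⟩
    exact ⟨a, ha, x, hx, y, hy, rfl⟩
  · rintro ⟨a, ha, x, hx, y, hy, rfl⟩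
    exact ⟨⟨a, x, y⟩, ⟨ha, hx, hy⟩, rfl⟩

lemma dist_pt (a x y a' x' y' : ℕ) :
    dist (pt a x y) (pt a' x' y') =
      Real.sqrt (((10*a+x : ℝ) - (10*a'+x'))^2 + ((y : ℝ) - y')^2) := by
  rw [EuclideanSpace.dist_eq]
  congr 1
  simp [Fin.sum_univ_two, pt, Real.dist_eq, sq_abs]

lemma pt_inj {a x y a' x' y' : ℕ} (hx : x < 2) (hx' : x' < 2)
    (h : pt a x y = pt a' x' y') : a = a' ∧ x = x' ∧ y = y' := by
  have h0 := congrArg (fun v : EuclideanSpace ℝ (Fin 2) => v 0) h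
  have h1 := congrArg (fun v : EuclideanSpace ℝ (Fin 2) => v 1) h
  simp [pt] at h0 h1
  have hy : y = y' := by exact_mod_cast h1
  have h0' : 10 * a + x = 10 * a' + x' := by exact_mod_cast h0
  omega

lemma card_three : threeSquaresEuclidean.card = 12 := by
  classical
  rw [threeSquaresEuclidean]
  rw [Finset.card_image_of_injOn]
  · simp
  · rintro ⟨a, x, y⟩ h ⟨a', x', y'⟩ h' heq
    simp only [Finset.coe_product, Set.mem_prod, Finset.mem_coe, Finset.mem_range] at h h'
    have := pt_inj (a := a) (x := x) (y := y) (a' := a') (x' := x') (y' := y')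
      h.2.1 h'.2.1 heq
    simp only [Prod.mk.injEq]
    exact ⟨this.1, this.2.1, this.2.2⟩

lemma inner_ge_one {a x y a' x' y' : ℕ} (hx : x < 2) (hy : y < 2)
    (hx' : x' < 2) (hy' : y' < 2)
    (hne : ¬(a = a' ∧ x = x' ∧ y = y')) :
    1 ≤ ((10*a+x : ℝ) - (10*a'+x'))^2 + ((y : ℝ) - y')^2 := by
  by_cases haa : a = a'
  · subst haa
    by_cases hxx : x = x'
    · subst hxx
      have hyy : y ≠ y' := by tauto
      have : ((y:ℝ) - y')^2 ≥ 1 := by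
        interval_cases y <;> interval_cases y' <;> norm_num at hyy <;> norm_num
      nlinarith [sq_nonneg ((10*a+x : ℝ) - (10*a+x))]
    · have : ((10*a+x : ℝ) - (10*a+x'))^2 ≥ 1 := by
        interval_cases x <;> interval_cases x' <;> norm_num at hxx <;> norm_num
      nlinarith [sq_nonneg ((y:ℝ) - y')]
  · have hA : ((a:ℝ) - a')^2 ≥ 1 := by
      have : a < a' ∨ a' < a := by omega
      rcases this with h | h
      · have : (a:ℝ) + 1 ≤ a' := by exact_mod_cast h
        nlinarith
      · have : (a':ℝ) + 1 ≤ a := by exact_mod_cast h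
        nlinarith
    have hX : (0:ℝ) ≤ x := Nat.cast_nonneg x
    have hX1 : (x:ℝ) ≤ 1 := by exact_mod_cast Nat.lt_succ_iff.mp hx
    have hX0' : (0:ℝ) ≤ x' := Nat.cast_nonneg x'
    have hX1' : (x':ℝ) ≤ 1 := by exact_mod_cast Nat.lt_succ_iff.mp hx'
    nlinarith [sq_nonneg ((y:ℝ) - y'), sq_nonneg ((a:ℝ) - a' + (x - x')), sq_nonneg ((a:ℝ)-a')]

lemma inner_ge_two {a x y a' x' y' : ℕ} (hx : x < 2) (hx' : x' < 2) (haa : a ≠ a') :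
    2 ≤ ((10*a+x : ℝ) - (10*a'+x'))^2 + ((y : ℝ) - y')^2 := by
  have hA : ((a:ℝ) - a')^2 ≥ 1 := by
    have : a < a' ∨ a' < a := by omega
    rcases this with h | h
    · have : (a:ℝ) + 1 ≤ a' := by exact_mod_cast h
      nlinarith
    · have : (a':ℝ) + 1 ≤ a := by exact_mod_cast h
      nlinarith
  have hX : (0:ℝ) ≤ x := Nat.cast_nonneg x
  have hX1 : (x:ℝ) ≤ 1 := by exact_mod_cast Nat.lt_succ_iff.mp hx
  have hX0' : (0:ℝ) ≤ x' := Nat.cast_nonneg x'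
  have hX1' : (x':ℝ) ≤ 1 := by exact_mod_cast Nat.lt_succ_iff.mp hx'
  nlinarith [sq_nonneg ((y:ℝ) - y'), sq_nonneg ((a:ℝ) - a' + (x - x')), sq_nonneg ((a:ℝ)-a')]

lemma dist_ge_one {a x y a' x' y' : ℕ} (hx : x < 2) (hy : y < 2)
    (hx' : x' < 2) (hy' : y' < 2) (hne : ¬(a = a' ∧ x = x' ∧ y = y')) :
    1 ≤ dist (pt a x y) (pt a' x' y') := by
  rw [dist_pt]
  rw [show (1:ℝ) = Real.sqrt 1 by simp]
  exact Real.sqrt_le_sqrt (inner_ge_one hx hy hx' hy' hne)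

lemma dist_ge_sqrt2 {a x y a' x' y' : ℕ} (hx : x < 2) (hx' : x' < 2) (haa : a ≠ a') :
    Real.sqrt 2 ≤ dist (pt a x y) (pt a' x' y') := by
  rw [dist_pt]
  exact Real.sqrt_le_sqrt (inner_ge_two hx hx' haa)

noncomputable def sqClass (v : EuclideanSpace ℝ (Fin 2)) : ℕ :=
  if v 0 < 5 then 0 else if v 0 < 15 then 1 else 2

lemma sqClass_pt {a x y : ℕ} (ha : a < 3) (hx : x < 2) :
    sqClass (pt a x y) = a := by
  have h0 : (pt a x y) 0 = (10 * a + x : ℝ) := by simp [pt]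
  unfold sqClass
  rw [h0]
  interval_cases a <;> interval_cases x <;> norm_num

lemma dist_adj_x (a x y : ℕ) (hx : x < 2) :
    dist (pt a x y) (pt a (1-x) y) ≤ 1 := by
  rw [dist_pt]
  interval_cases x <;> norm_num

lemma dist_adj_y (a x y : ℕ) (hy : y < 2) :
    dist (pt a x y) (pt a x (1-y)) ≤ 1 := by
  rw [dist_pt]
  interval_cases y <;> norm_num

lemma dist_opp (a x y : ℕ) (hx : x < 2) (hy : y < 2) :
    dist (pt a (1-x) (1-y)) (pt a x y) = Real.sqrt 2 := by
  rw [dist_pt]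
  interval_cases x <;> interval_cases y <;> norm_num

lemma NR_one {a x y : ℕ} (ha : a < 3) (hx : x < 2) (hy : y < 2) :
    NR threeSquaresEuclidean 4 (pt a x y) = 1 := by
  classical
  have hmem : ∀ {a' x' y' : ℕ}, a' < 3 → x' < 2 → y' < 2 →
      pt a' x' y' ∈ threeSquaresEuclidean := fun h1 h2 h3 =>
    mem_three.mpr ⟨_, h1, _, h2, _, h3, rfl⟩
  -- at radius 1 the filter has at least 3 elements
  have h3 : (3:ℕ) ≤ (threeSquaresEuclidean.filter fun p => dist (pt a x y) p ≤ 1).card := by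
    have hsub : ({pt a x y, pt a (1-x) y, pt a x (1-y)} : Finset _) ⊆
        threeSquaresEuclidean.filter (fun p => dist (pt a x y) p ≤ 1) := by
      intro p hp
      simp only [Finset.mem_insert, Finset.mem_singleton] at hp
      rcases hp with rfl | rfl | rfl
      · exact Finset.mem_filter.mpr ⟨hmem ha hx hy, by simp⟩
      · exact Finset.mem_filter.mpr ⟨hmem ha (by omega) hy, dist_adj_x a x y hx⟩
      · exact Finset.mem_filter.mpr ⟨hmem ha hx (by omega), dist_adj_y a x y hy⟩
    have hcard : ({pt a x y, pt a (1-x) y, pt a x (1-y)} : Finset _).card = 3 := by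
      rw [Finset.card_insert_of_notMem, Finset.card_insert_of_notMem,
        Finset.card_singleton]
      · simp only [Finset.mem_singleton]
        intro h
        have := pt_inj (by omega) hx h
        omega
      · simp only [Finset.mem_insert, Finset.mem_singleton]
        push_neg
        constructor
        · intro h
          have := pt_inj hx (by omega) h
          omega
        · intro h
          have := pt_inj hx hx h
          omega
    calc (3:ℕ) = ({pt a x y, pt a (1-x) y, pt a x (1-y)} : Finset _).card := hcard.symm
    _ ≤ _ := Finset.card_le_card hsub
  have hone : (1:ℝ) ∈ {r : ℝ | 0 ≤ r ∧ (threeSquaresEuclidean.card : ℝ) / (4:ℕ) ≤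
      ((threeSquaresEuclidean.filter fun p => dist (pt a x y) p ≤ r).card : ℝ)} := by
    refine ⟨zero_le_one, ?_⟩
    rw [card_three]
    have : (3:ℝ) ≤ ((threeSquaresEuclidean.filter fun p => dist (pt a x y) p ≤ 1).card : ℝ) := by
      exact_mod_cast h3
    push_cast
    linarith
  have hlb : ∀ r ∈ {r : ℝ | 0 ≤ r ∧ (threeSquaresEuclidean.card : ℝ) / (4:ℕ) ≤
      ((threeSquaresEuclidean.filter fun p => dist (pt a x y) p ≤ r).card : ℝ)}, (1:ℝ) ≤ r := by
    rintro r ⟨hr0, hrc⟩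
    by_contra hcon
    push_neg at hcon
    have hsub : (threeSquaresEuclidean.filter fun p => dist (pt a x y) p ≤ r) ⊆
        {pt a x y} := by
      intro p hp
      rw [Finset.mem_filter] at hp
      obtain ⟨hpP, hpd⟩ := hp
      obtain ⟨a', ha', x', hx', y', hy', rfl⟩ := mem_three.mp hpP
      simp only [Finset.mem_singleton]
      by_contra hne
      have h1 : (1:ℝ) ≤ dist (pt a x y) (pt a' x' y') := by
        refine dist_ge_one hx hy hx' hy' ?_
        rintro ⟨rfl, rfl, rfl⟩
        exact hne rfl
      linarith
    have hle1 : (threeSquaresEuclidean.filter fun p => dist (pt a x y) p ≤ r).card ≤ 1 := by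
      calc _ ≤ ({pt a x y} : Finset _).card := Finset.card_le_card hsub
      _ = 1 := Finset.card_singleton _
    rw [card_three] at hrc
    have : ((threeSquaresEuclidean.filter fun p => dist (pt a x y) p ≤ r).card : ℝ) ≤ 1 := by
      exact_mod_cast hle1
    norm_num at hrc
    linarith
  unfold NR
  exact le_antisymm (csInf_le ⟨0, fun r hr => hr.1⟩ hone) (le_csInf ⟨1, hone⟩ hlb)

/-- On three well-separated unit squares in the Euclidean plane with `k = 4`, every point
has neighborhood radius 1, yet every choice of at most 4 centers leaves some point at
distance at least `√2 = √2·NR(i)` from all centers. -/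
theorem euclidean_squares_sqrt_two_lower_bound :
    (∀ i ∈ threeSquaresEuclidean, NR threeSquaresEuclidean 4 i = 1) ∧
    ∀ S : Finset (EuclideanSpace ℝ (Fin 2)), S ⊆ threeSquaresEuclidean → S.card ≤ 4 →
      ∃ i ∈ threeSquaresEuclidean, ∀ s ∈ S, Real.sqrt 2 ≤ dist i s := by
  classical
  constructor
  · intro i hi
    obtain ⟨a, ha, x, hx, y, hy, rfl⟩ := mem_three.mp hi
    exact NR_one ha hx hy
  · intro S hS hcard
    have hfib : ∀ v ∈ S, sqClass v ∈ Finset.range 3 := by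
      intro v hv
      obtain ⟨a, ha, x, hx, y, hy, rfl⟩ := mem_three.mp (hS hv)
      rw [sqClass_pt ha hx]
      exact Finset.mem_range.mpr ha
    have hsum := Finset.card_eq_sum_card_fiberwise hfib
    obtain ⟨a, ha3, hTa⟩ :
        ∃ a ∈ Finset.range 3, (S.filter fun v => sqClass v = a).card ≤ 1 := by
      by_contra hc
      push_neg at hc
      have h6 : 6 ≤ ∑ b ∈ Finset.range 3, (S.filter fun v => sqClass v = b).card := by
        calc (6:ℕ) = ∑ _b ∈ Finset.range 3, 2 := by simp
        _ ≤ _ := Finset.sum_le_sum fun b hb => hc b hb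
      omega
    rw [Finset.mem_range] at ha3
    by_cases hne : (S.filter fun v => sqClass v = a).Nonempty
    · obtain ⟨s0, hs0⟩ := hne
      have hs0' := hs0
      rw [Finset.mem_filter] at hs0
      obtain ⟨a0, ha0, x0, hx0, y0, hy0, he⟩ := mem_three.mp (hS hs0.1)
      have haa : a0 = a := by
        have := hs0.2
        rw [he, sqClass_pt ha0 hx0] at this
        exact this
      subst haa
      refine ⟨pt a0 (1-x0) (1-y0),
        mem_three.mpr ⟨a0, ha0, _, by omega, _, by omega, rfl⟩, ?_⟩
      intro s hs
      obtain ⟨a', ha', x', hx', y', hy', rfl⟩ := mem_three.mp (hS hs)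
      by_cases haa' : a' = a0
      · subst haa'
        have hsf : pt a' x' y' ∈ S.filter fun v => sqClass v = a' :=
          Finset.mem_filter.mpr ⟨hs, sqClass_pt ha' hx'⟩
        have heq : pt a' x' y' = s0 := Finset.card_le_one.mp hTa _ hsf _ hs0'
        rw [heq, he]
        exact le_of_eq (dist_opp a' x0 y0 hx0 hy0).symm
      · exact dist_ge_sqrt2 (by omega) hx' fun h => haa' h.symm
    · refine ⟨pt a 0 0, mem_three.mpr ⟨a, ha3, 0, by norm_num, 0, by norm_num, rfl⟩, ?_⟩
      intro s hs
      obtain ⟨a', ha', x', hx', y', hy', rfl⟩ := mem_three.mp (hS hs)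
      have haa' : a' ≠ a := by
        intro h
        exact hne ⟨pt a' x' y', Finset.mem_filter.mpr ⟨hs, by rw [sqClass_pt ha' hx']; exact h⟩⟩
      exact dist_ge_sqrt2 (by norm_num) hx' haa'.symm
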